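/- Let q ∈ ℂ* with |q| ≠ 1 and let a ∈ ℂ(z)*. Then the elliptic divisor div_E(a) is zero if and only if there exist an integer r, a complex number μ ∈ ℂ* and h ∈ ℂ(z)* such that a = μ·z^r·σ_q(h)/h. -/

import Mathlib

/-!
Setting: fix `q ∈ ℂ*` with `|q| ≠ 1`.  We work with meromorphic functions on the
punctured plane `ℂ* = {z ≠ 0}`, represented as plain functions `ℂ → ℂ` together
with a `MeromorphicOn` hypothesis; all identities between meromorphic functions
are understood to hold off a countable (discrete) exceptional set (`MZeroOn`).

* `CE q` is the field `C_E` of `σ_q`-invariant meromorphic functions on `ℂ*`;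
* `KE q` is the field `K_E = C_E(z)`;
* `AlgIndepOver U K g` says that the family `g` of meromorphic functions on `U`
  is algebraically independent over the coefficient field `K`: every polynomial
  with coefficients in `K` that vanishes (as meromorphic function on `U`) at the
  family has all its coefficients zero as meromorphic functions;
* `delq` is the derivation `∂ = z·d/dz` on functions, `dRat` the corresponding
  derivation on rational functions;
* `sigmaq q` is the substitution `z ↦ qz` on rational functions `RatFunc ℂ`;
* `QDE q a f` is the q-difference equation `f(qz) = a(z)·f(z)` as an identity of
  meromorphic functions on `ℂ*` (written without denominators);
* `ordAt a c` is the order of vanishing of the rational function `a` at `c`, and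
  `divE q hq a` is the elliptic divisor of `a`, an element of the free abelian
  group on `ℂ*/q^ℤ` (realised as a finitely supported `ℤ`-valued function on the
  quotient group `ℂˣ ⧸ zpowers q`).
-/

open scoped Classical

noncomputable section

/-- The punctured complex plane ℂ*. -/
def Cstar : Set ℂ := {z : ℂ | z ≠ 0}

/-- `f` represents the zero meromorphic function on `U`:
it vanishes off a countable exceptional set. -/
def MZeroOn (U : Set ℂ) (f : ℂ → ℂ) : Prop :=
  ∃ S : Set ℂ, S.Countable ∧ ∀ z ∈ U \ S, f z = 0

/-- `f` is a nonzero meromorphic function on `U`. -/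
def MerNonzero (U : Set ℂ) (f : ℂ → ℂ) : Prop :=
  MeromorphicOn f U ∧ ¬ MZeroOn U f

/-- The derivation ∂ = z·d/dz. -/
def delq (f : ℂ → ℂ) : ℂ → ℂ := fun z => z * deriv f z

/-- The field C_E of σ_q-invariant meromorphic functions on ℂ*. -/
def CE (q : ℂ) : Set (ℂ → ℂ) :=
  {c | MeromorphicOn c Cstar ∧ ∀ z : ℂ, c (q * z) = c z}

/-- Evaluation of a polynomial with function coefficients at the coordinate z. -/
def evalz (P : Polynomial (ℂ → ℂ)) : ℂ → ℂ :=
  Polynomial.eval (fun z : ℂ => z) P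

/-- The field K_E = C_E(z): quotients of polynomials in z with coefficients in C_E. -/
def KE (q : ℂ) : Set (ℂ → ℂ) :=
  {f | ∃ Np Dp : Polynomial (ℂ → ℂ),
        (∀ i, Np.coeff i ∈ CE q) ∧ (∀ i, Dp.coeff i ∈ CE q) ∧
        ¬ MZeroOn Cstar (evalz Dp) ∧
        MZeroOn Cstar (fun z => f z * evalz Dp z - evalz Np z)}

/-- The family `g` of meromorphic functions on `U` is algebraically independent
over the set `K` of coefficient functions. -/
def AlgIndepOver (U : Set ℂ) (K : Set (ℂ → ℂ)) {ι : Type} (g : ι → ℂ → ℂ) : Prop :=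
  ∀ P : MvPolynomial ι (ℂ → ℂ),
    (∀ m, MvPolynomial.coeff m P ∈ K) →
    MZeroOn U (MvPolynomial.eval g P) →
    ∀ m, MZeroOn U (MvPolynomial.coeff m P)

/-- σ_q acting on rational functions: (σ_q a)(z) = a(qz). -/
def sigmaq (q : ℂ) (a : RatFunc ℂ) : RatFunc ℂ :=
  algebraMap (Polynomial ℂ) (RatFunc ℂ) (a.num.comp (Polynomial.C q * Polynomial.X)) /
    algebraMap (Polynomial ℂ) (RatFunc ℂ) (a.denom.comp (Polynomial.C q * Polynomial.X))

/-- The q-difference equation f(qz) = a(z)·f(z), as an identity of meromorphic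
functions on ℂ* (denominators cleared). -/
def QDE (q : ℂ) (a : RatFunc ℂ) (f : ℂ → ℂ) : Prop :=
  MZeroOn Cstar (fun z => f (q * z) * Polynomial.eval z a.denom - Polynomial.eval z a.num * f z)

/-- Order of vanishing of a rational function at a point. -/
def ordAt (a : RatFunc ℂ) (c : ℂ) : ℤ :=
  (Polynomial.rootMultiplicity c a.num : ℤ) - (Polynomial.rootMultiplicity c a.denom : ℤ)

/-- The elliptic divisor of a rational function: the image in Div(ℂ*/q^ℤ) of the
part of its divisor prime to 0, as a (finitely supported) ℤ-valued function on
the quotient group ℂˣ/q^ℤ. -/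
def divE (q : ℂ) (hq : q ≠ 0) (a : RatFunc ℂ) :
    (ℂˣ ⧸ Subgroup.zpowers (Units.mk0 q hq)) → ℤ := fun c =>
  ∑ᶠ α : ℂˣ,
    if (QuotientGroup.mk α : ℂˣ ⧸ Subgroup.zpowers (Units.mk0 q hq)) = c then
      ordAt a (α : ℂ) else 0

/-- An element of ℂ(z)* is standard if no two points of its divisor away from 0
are congruent modulo q^ℤ: if c ∈ ℂ* is a zero or pole of a and m ≠ 0, then q^m·c
is not a zero or pole of a. -/
def StandardQ (q : ℂ) (a : RatFunc ℂ) : Prop :=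
  ∀ c : ℂ, c ≠ 0 → ordAt a c ≠ 0 → ∀ m : ℤ, m ≠ 0 → ordAt a (q ^ m * c) = 0

/-- The derivation ∂ = z·d/dz on rational functions. -/
def dRat (a : RatFunc ℂ) : RatFunc ℂ :=
  RatFunc.X *
    ((algebraMap (Polynomial ℂ) (RatFunc ℂ) (Polynomial.derivative a.num) *
        algebraMap (Polynomial ℂ) (RatFunc ℂ) a.denom -
      algebraMap (Polynomial ℂ) (RatFunc ℂ) a.num *
        algebraMap (Polynomial ℂ) (RatFunc ℂ) (Polynomial.derivative a.denom)) /
      algebraMap (Polynomial ℂ) (RatFunc ℂ) a.denom ^ 2)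


/-! ### Auxiliary lemmas -/

open Polynomial

section Aux

variable {q : ℂ}

lemma comp_qX_ne_zero (hq : q ≠ 0) {p : ℂ[X]} (hp : p ≠ 0) :
    p.comp (C q * X) ≠ 0 := by
  intro h
  rw [Polynomial.comp_eq_zero_iff] at h
  rcases h with h | ⟨_, h⟩
  · exact hp h
  · apply hq
    have := congrArg (fun r => Polynomial.coeff r 1) h
    simpa using this

lemma dvd_comp_qX (q c : ℂ) (n : ℕ) {p : ℂ[X]} (h : (X - C (q * c)) ^ n ∣ p) :
    (X - C c) ^ n ∣ p.comp (C q * X) := by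
  obtain ⟨s, rfl⟩ := h
  refine ⟨C q ^ n * s.comp (C q * X), ?_⟩
  rw [mul_comp, pow_comp, sub_comp, X_comp, C_comp]
  have hcq : C q * X - C (q * c) = C q * (X - C c) := by
    rw [C_mul]; ring
  rw [hcq, mul_pow]; ring

lemma rootMult_comp (hq : q ≠ 0) {p : ℂ[X]} (hp : p ≠ 0) (c : ℂ) :
    rootMultiplicity c (p.comp (C q * X)) = rootMultiplicity (q * c) p := by
  have hcomp : p.comp (C q * X) ≠ 0 := comp_qX_ne_zero hq hp
  have hXX : (C q * X).comp (C q⁻¹ * X) = X := by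
    rw [mul_comp, C_comp, X_comp, ← mul_assoc, ← C_mul, mul_inv_cancel₀ hq, C_1, one_mul]
  have hback : (p.comp (C q * X)).comp (C q⁻¹ * X) = p := by
    rw [comp_assoc, hXX, comp_X]
  apply le_antisymm
  · rw [Polynomial.le_rootMultiplicity_iff hp]
    have h1 : (X - C c) ^ rootMultiplicity c (p.comp (C q * X)) ∣ p.comp (C q * X) :=
      Polynomial.pow_rootMultiplicity_dvd _ _
    have h2 := dvd_comp_qX q⁻¹ (q * c) (rootMultiplicity c (p.comp (C q * X)))
      (p := p.comp (C q * X)) (by rwa [inv_mul_cancel_left₀ hq])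
    rwa [hback] at h2
  · rw [Polynomial.le_rootMultiplicity_iff hcomp]
    exact dvd_comp_qX q c _ (Polynomial.pow_rootMultiplicity_dvd _ _)

lemma num_denom_rel {p r : ℂ[X]} (hr : r ≠ 0) {a : RatFunc ℂ}
    (hpr : a = algebraMap ℂ[X] (RatFunc ℂ) p / algebraMap ℂ[X] (RatFunc ℂ) r) :
    a.num * r = p * a.denom := by
  apply RatFunc.algebraMap_injective
  rw [map_mul, map_mul]
  have h1 : algebraMap ℂ[X] (RatFunc ℂ) a.num / algebraMap ℂ[X] (RatFunc ℂ) a.denom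
      = algebraMap ℂ[X] (RatFunc ℂ) p / algebraMap ℂ[X] (RatFunc ℂ) r := by
    rw [RatFunc.num_div_denom, hpr]
  rw [div_eq_div_iff (RatFunc.algebraMap_ne_zero (RatFunc.denom_ne_zero a))
    (RatFunc.algebraMap_ne_zero hr)] at h1
  exact h1

lemma ordAt_eq {p r : ℂ[X]} (hp : p ≠ 0) (hr : r ≠ 0) {a : RatFunc ℂ}
    (hpr : a = algebraMap ℂ[X] (RatFunc ℂ) p / algebraMap ℂ[X] (RatFunc ℂ) r) (c : ℂ) :
    ordAt a c = (rootMultiplicity c p : ℤ) - rootMultiplicity c r := by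
  have ha : a ≠ 0 := by
    rw [hpr]
    exact div_ne_zero (RatFunc.algebraMap_ne_zero hp) (RatFunc.algebraMap_ne_zero hr)
  have hnum : a.num ≠ 0 := RatFunc.num_ne_zero ha
  have hden : a.denom ≠ 0 := RatFunc.denom_ne_zero a
  have h := congrArg (rootMultiplicity c) (num_denom_rel hr hpr)
  rw [Polynomial.rootMultiplicity_mul (mul_ne_zero hnum hr),
    Polynomial.rootMultiplicity_mul (mul_ne_zero hp hden)] at h
  unfold ordAt
  omega

lemma ordAt_mul {a b : RatFunc ℂ} (ha : a ≠ 0) (hb : b ≠ 0) (c : ℂ) :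
    ordAt (a * b) c = ordAt a c + ordAt b c := by
  have hab : a * b = algebraMap ℂ[X] (RatFunc ℂ) (a.num * b.num) /
      algebraMap ℂ[X] (RatFunc ℂ) (a.denom * b.denom) := by
    rw [map_mul, map_mul, ← div_mul_div_comm, RatFunc.num_div_denom, RatFunc.num_div_denom]
  rw [ordAt_eq (mul_ne_zero (RatFunc.num_ne_zero ha) (RatFunc.num_ne_zero hb))
      (mul_ne_zero (RatFunc.denom_ne_zero a) (RatFunc.denom_ne_zero b)) hab c,
    Polynomial.rootMultiplicity_mul
      (mul_ne_zero (RatFunc.num_ne_zero ha) (RatFunc.num_ne_zero hb)),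
    Polynomial.rootMultiplicity_mul
      (mul_ne_zero (RatFunc.denom_ne_zero a) (RatFunc.denom_ne_zero b)),
    ordAt_eq (RatFunc.num_ne_zero ha) (RatFunc.denom_ne_zero a)
      (RatFunc.num_div_denom a).symm c,
    ordAt_eq (RatFunc.num_ne_zero hb) (RatFunc.denom_ne_zero b)
      (RatFunc.num_div_denom b).symm c]
  push_cast
  ring

lemma ordAt_one (c : ℂ) : ordAt (1 : RatFunc ℂ) c = 0 := by
  have h : (1 : RatFunc ℂ) = algebraMap ℂ[X] (RatFunc ℂ) 1 / algebraMap ℂ[X] (RatFunc ℂ) 1 := by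
    simp
  rw [ordAt_eq one_ne_zero one_ne_zero h c]
  ring

lemma ordAt_inv {a : RatFunc ℂ} (ha : a ≠ 0) (c : ℂ) :
    ordAt a⁻¹ c = -ordAt a c := by
  have h := ordAt_mul ha (inv_ne_zero ha) c
  rw [mul_inv_cancel₀ ha, ordAt_one] at h
  omega

lemma ordAt_zpow {a : RatFunc ℂ} (ha : a ≠ 0) (n : ℤ) (c : ℂ) :
    ordAt (a ^ n) c = n * ordAt a c := by
  induction n using Int.induction_on with
  | zero => simpa using ordAt_one c
  | succ k ih =>
      rw [zpow_add_one₀ ha, ordAt_mul (zpow_ne_zero _ ha) ha, ih]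
      ring
  | pred k ih =>
      rw [zpow_sub_one₀ ha, ordAt_mul (zpow_ne_zero _ ha) (inv_ne_zero ha),
        ordAt_inv ha, ih]
      ring

lemma ordAt_sigmaq (hq : q ≠ 0) {h : RatFunc ℂ} (hh : h ≠ 0) (c : ℂ) :
    ordAt (sigmaq q h) c = ordAt h (q * c) := by
  have h1 : h.num.comp (C q * X) ≠ 0 := comp_qX_ne_zero hq (RatFunc.num_ne_zero hh)
  have h2 : h.denom.comp (C q * X) ≠ 0 := comp_qX_ne_zero hq (RatFunc.denom_ne_zero h)
  unfold sigmaq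
  rw [ordAt_eq h1 h2 rfl c, rootMult_comp hq (RatFunc.num_ne_zero hh),
    rootMult_comp hq (RatFunc.denom_ne_zero h),
    ordAt_eq (RatFunc.num_ne_zero hh) (RatFunc.denom_ne_zero h)
      (RatFunc.num_div_denom h).symm (q * c)]

lemma sigmaq_ne_zero (hq : q ≠ 0) {h : RatFunc ℂ} (hh : h ≠ 0) :
    sigmaq q h ≠ 0 :=
  div_ne_zero (RatFunc.algebraMap_ne_zero (comp_qX_ne_zero hq (RatFunc.num_ne_zero hh)))
    (RatFunc.algebraMap_ne_zero (comp_qX_ne_zero hq (RatFunc.denom_ne_zero h)))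

lemma sigmaq_spec (hq : q ≠ 0) {p r : ℂ[X]} (hp : p ≠ 0) (hr : r ≠ 0)
    {x : RatFunc ℂ} (hx : x = algebraMap ℂ[X] (RatFunc ℂ) p / algebraMap ℂ[X] (RatFunc ℂ) r) :
    sigmaq q x = algebraMap ℂ[X] (RatFunc ℂ) (p.comp (C q * X)) /
      algebraMap ℂ[X] (RatFunc ℂ) (r.comp (C q * X)) := by
  have hx0 : x ≠ 0 := by
    rw [hx]
    exact div_ne_zero (RatFunc.algebraMap_ne_zero hp) (RatFunc.algebraMap_ne_zero hr)
  have hrel := num_denom_rel hr hx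
  have hrel2 : x.num.comp (C q * X) * r.comp (C q * X)
      = p.comp (C q * X) * x.denom.comp (C q * X) := by
    rw [← mul_comp, ← mul_comp, hrel]
  unfold sigmaq
  rw [div_eq_div_iff
    (RatFunc.algebraMap_ne_zero (comp_qX_ne_zero hq (RatFunc.denom_ne_zero x)))
    (RatFunc.algebraMap_ne_zero (comp_qX_ne_zero hq hr))]
  rw [← map_mul, ← map_mul, hrel2]

lemma sigmaq_mul (hq : q ≠ 0) {a b : RatFunc ℂ} (ha : a ≠ 0) (hb : b ≠ 0) :
    sigmaq q (a * b) = sigmaq q a * sigmaq q b := by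
  have hab : a * b = algebraMap ℂ[X] (RatFunc ℂ) (a.num * b.num) /
      algebraMap ℂ[X] (RatFunc ℂ) (a.denom * b.denom) := by
    rw [map_mul, map_mul, ← div_mul_div_comm, RatFunc.num_div_denom, RatFunc.num_div_denom]
  rw [sigmaq_spec hq (mul_ne_zero (RatFunc.num_ne_zero ha) (RatFunc.num_ne_zero hb))
      (mul_ne_zero (RatFunc.denom_ne_zero a) (RatFunc.denom_ne_zero b)) hab,
    sigmaq_spec hq (RatFunc.num_ne_zero ha) (RatFunc.denom_ne_zero a)
      (RatFunc.num_div_denom a).symm,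
    sigmaq_spec hq (RatFunc.num_ne_zero hb) (RatFunc.denom_ne_zero b)
      (RatFunc.num_div_denom b).symm,
    mul_comp, mul_comp, map_mul, map_mul, div_mul_div_comm]

lemma sigmaq_one (hq : q ≠ 0) : sigmaq q (1 : RatFunc ℂ) = 1 := by
  have h : (1 : RatFunc ℂ) = algebraMap ℂ[X] (RatFunc ℂ) 1 / algebraMap ℂ[X] (RatFunc ℂ) 1 := by
    simp
  rw [sigmaq_spec hq one_ne_zero one_ne_zero h]
  simp

lemma sigmaq_inv (hq : q ≠ 0) {a : RatFunc ℂ} (ha : a ≠ 0) :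
    sigmaq q a⁻¹ = (sigmaq q a)⁻¹ := by
  have h := sigmaq_mul hq ha (inv_ne_zero ha)
  rw [mul_inv_cancel₀ ha, sigmaq_one hq] at h
  exact eq_inv_of_mul_eq_one_left (by rw [mul_comm]; exact h.symm)

/-- The subgroup-like predicate: `a = μ · σ_q(h)/h`. -/
def SQ (q : ℂ) (a : RatFunc ℂ) : Prop :=
  ∃ μ : ℂ, μ ≠ 0 ∧ ∃ h : RatFunc ℂ, h ≠ 0 ∧ a = RatFunc.C μ * sigmaq q h / h

lemma SQ_ne_zero (hq : q ≠ 0) {a : RatFunc ℂ} (h : SQ q a) : a ≠ 0 := by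
  obtain ⟨μ, hμ, h, hh, rfl⟩ := h
  refine div_ne_zero (mul_ne_zero ?_ (sigmaq_ne_zero hq hh)) hh
  simpa using hμ

lemma RatFunc_C_ne_zero {μ : ℂ} (hμ : μ ≠ 0) : (RatFunc.C μ : RatFunc ℂ) ≠ 0 := by
  simpa using hμ

lemma SQ_one (hq : q ≠ 0) : SQ q (1 : RatFunc ℂ) :=
  ⟨1, one_ne_zero, 1, one_ne_zero, by rw [sigmaq_one hq]; simp⟩

lemma SQ_mul (hq : q ≠ 0) {a b : RatFunc ℂ} (ha : SQ q a) (hb : SQ q b) :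
    SQ q (a * b) := by
  obtain ⟨μ1, hμ1, h1, hh1, rfl⟩ := ha
  obtain ⟨μ2, hμ2, h2, hh2, rfl⟩ := hb
  refine ⟨μ1 * μ2, mul_ne_zero hμ1 hμ2, h1 * h2, mul_ne_zero hh1 hh2, ?_⟩
  rw [sigmaq_mul hq hh1 hh2, map_mul]
  field_simp

lemma SQ_inv (hq : q ≠ 0) {a : RatFunc ℂ} (ha : SQ q a) : SQ q a⁻¹ := by
  obtain ⟨μ, hμ, h, hh, rfl⟩ := ha
  refine ⟨μ⁻¹, inv_ne_zero hμ, h⁻¹, inv_ne_zero hh, ?_⟩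
  rw [sigmaq_inv hq hh, map_inv₀]
  rw [div_eq_mul_inv, div_eq_mul_inv, mul_inv, mul_inv, inv_inv]

lemma SQ_zpow (hq : q ≠ 0) {a : RatFunc ℂ} (ha : SQ q a) (n : ℤ) : SQ q (a ^ n) := by
  induction n using Int.induction_on with
  | zero => simpa using SQ_one hq
  | succ k ih =>
      rw [zpow_add_one₀ (SQ_ne_zero hq ha)]
      exact SQ_mul hq ih ha
  | pred k ih =>
      rw [zpow_sub_one₀ (SQ_ne_zero hq ha)]
      exact SQ_mul hq ih (SQ_inv hq ha)

lemma SQ_basic (hq : q ≠ 0) (β : ℂ) :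
    SQ q (algebraMap ℂ[X] (RatFunc ℂ) (X - C (q⁻¹ * β)) /
      algebraMap ℂ[X] (RatFunc ℂ) (X - C β)) := by
  refine ⟨q⁻¹, inv_ne_zero hq, algebraMap ℂ[X] (RatFunc ℂ) (X - C β), ?_, ?_⟩
  · exact RatFunc.algebraMap_ne_zero (X_sub_C_ne_zero β)
  · have hXβ : (X - C β : ℂ[X]) ≠ 0 := X_sub_C_ne_zero β
    have hspec : sigmaq q (algebraMap ℂ[X] (RatFunc ℂ) (X - C β))
        = algebraMap ℂ[X] (RatFunc ℂ) ((X - C β).comp (C q * X)) := by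
      have h := sigmaq_spec hq hXβ (one_ne_zero : (1:ℂ[X]) ≠ 0)
        (x := algebraMap ℂ[X] (RatFunc ℂ) (X - C β)) (by simp)
      simpa using h
    rw [hspec]
    have hpoly : Polynomial.C q⁻¹ * ((X - C β).comp (C q * X)) = X - C (q⁻¹ * β) := by
      rw [sub_comp, X_comp, C_comp, mul_sub, ← mul_assoc, ← C_mul, inv_mul_cancel₀ hq,
        C_1, one_mul, ← C_mul]
    have hmap := congrArg (algebraMap ℂ[X] (RatFunc ℂ)) hpoly
    rw [map_mul, RatFunc.algebraMap_C] at hmap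
    rw [← hmap]

lemma SQ_shift (hq : q ≠ 0) (α : ℂ) (m : ℤ) :
    SQ q (algebraMap ℂ[X] (RatFunc ℂ) (X - C α) /
      algebraMap ℂ[X] (RatFunc ℂ) (X - C (q ^ m * α))) := by
  induction m using Int.induction_on with
  | zero =>
      have h1 : algebraMap ℂ[X] (RatFunc ℂ) (X - C α) ≠ 0 :=
        RatFunc.algebraMap_ne_zero (X_sub_C_ne_zero α)
      have h2 : q ^ (0 : ℤ) * α = α := by simp
      rw [h2, div_self h1]
      exact SQ_one hq
  | succ k ih =>
      have key : algebraMap ℂ[X] (RatFunc ℂ) (X - C α) /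
            algebraMap ℂ[X] (RatFunc ℂ) (X - C (q ^ (k + 1 : ℤ) * α))
          = (algebraMap ℂ[X] (RatFunc ℂ) (X - C α) /
              algebraMap ℂ[X] (RatFunc ℂ) (X - C (q ^ (k : ℤ) * α))) *
            (algebraMap ℂ[X] (RatFunc ℂ) (X - C (q⁻¹ * (q ^ (k + 1 : ℤ) * α))) /
              algebraMap ℂ[X] (RatFunc ℂ) (X - C (q ^ (k + 1 : ℤ) * α))) := by
        have harg : q⁻¹ * (q ^ (k + 1 : ℤ) * α) = q ^ (k : ℤ) * α := by
          rw [zpow_add_one₀ hq]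
          field_simp
        rw [harg]
        rw [div_mul_div_comm]
        rw [mul_comm (algebraMap ℂ[X] (RatFunc ℂ) (X - C α))]
        rw [mul_div_mul_left]
        exact RatFunc.algebraMap_ne_zero (X_sub_C_ne_zero _)
      rw [key]
      exact SQ_mul hq ih (SQ_basic hq _)
  | pred k ih =>
      have key : algebraMap ℂ[X] (RatFunc ℂ) (X - C α) /
            algebraMap ℂ[X] (RatFunc ℂ) (X - C (q ^ (-(k:ℤ) - 1) * α))
          = (algebraMap ℂ[X] (RatFunc ℂ) (X - C α) /
              algebraMap ℂ[X] (RatFunc ℂ) (X - C (q ^ (-(k:ℤ)) * α))) *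
            (algebraMap ℂ[X] (RatFunc ℂ) (X - C (q⁻¹ * (q ^ (-(k:ℤ)) * α))) /
              algebraMap ℂ[X] (RatFunc ℂ) (X - C (q ^ (-(k:ℤ)) * α)))⁻¹ := by
        have harg : q⁻¹ * (q ^ (-(k:ℤ)) * α) = q ^ (-(k:ℤ) - 1) * α := by
          rw [zpow_sub_one₀ hq]
          ring
        rw [harg]
        rw [inv_div, div_mul_div_comm]
        rw [mul_comm (algebraMap ℂ[X] (RatFunc ℂ) (X - C α))]
        rw [mul_div_mul_left]
        exact RatFunc.algebraMap_ne_zero (X_sub_C_ne_zero _)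
      rw [key]
      exact SQ_mul hq ih (SQ_inv hq (SQ_basic hq _))

end Aux


section Aux2

variable {q : ℂ}

lemma ordAt_support_finite {a : RatFunc ℂ} (ha : a ≠ 0) :
    {α : ℂˣ | ordAt a (α : ℂ) ≠ 0}.Finite := by
  have hsub : {α : ℂˣ | ordAt a (α : ℂ) ≠ 0} ⊆
      Units.val ⁻¹' (↑a.num.roots.toFinset ∪ ↑a.denom.roots.toFinset) := by
    intro α hα
    simp only [Set.mem_setOf_eq] at hα
    have hroot : a.num.IsRoot (α : ℂ) ∨ a.denom.IsRoot (α : ℂ) := by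
      by_contra hc
      push_neg at hc
      have h1 := Polynomial.rootMultiplicity_eq_zero hc.1
      have h2 := Polynomial.rootMultiplicity_eq_zero hc.2
      unfold ordAt at hα
      omega
    simp only [Set.mem_preimage, Finset.coe_union, Set.mem_union, Finset.mem_coe,
      Multiset.mem_toFinset, Polynomial.mem_roots', ne_eq]
    rcases hroot with h | h
    · exact Or.inl ⟨RatFunc.num_ne_zero ha, h⟩
    · exact Or.inr ⟨RatFunc.denom_ne_zero a, h⟩
  exact Set.Finite.subset
    (Set.Finite.preimage Units.val_injective.injOn
      (((a.num.roots.toFinset : Finset ℂ).finite_toSet).union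
        ((a.denom.roots.toFinset : Finset ℂ).finite_toSet))) hsub

lemma if_support_subset (a : RatFunc ℂ) (hq0 : q ≠ 0)
    (c : ℂˣ ⧸ Subgroup.zpowers (Units.mk0 q hq0)) :
    Function.support (fun α : ℂˣ =>
        if (QuotientGroup.mk α : ℂˣ ⧸ Subgroup.zpowers (Units.mk0 q hq0)) = c then
          ordAt a (α : ℂ) else 0) ⊆ {α : ℂˣ | ordAt a (α : ℂ) ≠ 0} := by
  intro α hα
  simp only [Function.mem_support] at hα
  by_cases h : (QuotientGroup.mk α : ℂˣ ⧸ Subgroup.zpowers (Units.mk0 q hq0)) = c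
  · simp only [h, if_true] at hα
    exact hα
  · simp [h] at hα

lemma divE_mul (hq0 : q ≠ 0) {a b : RatFunc ℂ} (ha : a ≠ 0) (hb : b ≠ 0) :
    divE q hq0 (a * b) = divE q hq0 a + divE q hq0 b := by
  funext c
  show _ = divE q hq0 a c + divE q hq0 b c
  unfold divE
  rw [← finsum_add_distrib
    (Set.Finite.subset (ordAt_support_finite ha) (if_support_subset a hq0 c))
    (Set.Finite.subset (ordAt_support_finite hb) (if_support_subset b hq0 c))]
  congr 1
  funext α
  by_cases h : (QuotientGroup.mk α : ℂˣ ⧸ Subgroup.zpowers (Units.mk0 q hq0)) = c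
  · simp [h, ordAt_mul ha hb]
  · simp [h]

lemma divE_eq_zero_of (hq0 : q ≠ 0) {a : RatFunc ℂ}
    (h : ∀ α : ℂˣ, ordAt a (α : ℂ) = 0) : divE q hq0 a = 0 := by
  funext c
  show _ = 0
  unfold divE
  apply finsum_eq_zero_of_forall_eq_zero
  intro α
  by_cases hc : (QuotientGroup.mk α : ℂˣ ⧸ Subgroup.zpowers (Units.mk0 q hq0)) = c
  · simp [hc, h α]
  · simp [hc]

lemma divE_one (hq0 : q ≠ 0) : divE q hq0 1 = 0 :=
  divE_eq_zero_of hq0 (fun α => ordAt_one (α : ℂ))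

lemma divE_inv (hq0 : q ≠ 0) {a : RatFunc ℂ} (ha : a ≠ 0) :
    divE q hq0 a⁻¹ = -divE q hq0 a := by
  have h := divE_mul hq0 ha (inv_ne_zero ha)
  rw [mul_inv_cancel₀ ha, divE_one hq0] at h
  funext c
  have := congrFun h c
  simp only [Pi.zero_apply, Pi.add_apply] at this
  simp only [Pi.neg_apply]
  omega

lemma divE_C (hq0 : q ≠ 0) {μ : ℂ} (hμ : μ ≠ 0) :
    divE q hq0 (RatFunc.C μ) = 0 := by
  apply divE_eq_zero_of hq0
  intro α
  have hC : (RatFunc.C μ : RatFunc ℂ)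
      = algebraMap ℂ[X] (RatFunc ℂ) (C μ) / algebraMap ℂ[X] (RatFunc ℂ) 1 := by
    rw [RatFunc.algebraMap_C]; simp
  rw [ordAt_eq (by simpa using hμ) one_ne_zero hC]
  rw [Polynomial.rootMultiplicity_eq_zero (by simp [Polynomial.IsRoot, hμ]),
    Polynomial.rootMultiplicity_eq_zero (by simp [Polynomial.IsRoot])]
  ring

lemma ordAt_X {c : ℂ} (hc : c ≠ 0) : ordAt (RatFunc.X : RatFunc ℂ) c = 0 := by
  have hX : (RatFunc.X : RatFunc ℂ)
      = algebraMap ℂ[X] (RatFunc ℂ) X / algebraMap ℂ[X] (RatFunc ℂ) 1 := by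
    rw [RatFunc.algebraMap_X]; simp
  rw [ordAt_eq X_ne_zero one_ne_zero hX]
  rw [Polynomial.rootMultiplicity_eq_zero (by simp [Polynomial.IsRoot, hc]),
    Polynomial.rootMultiplicity_eq_zero (by simp [Polynomial.IsRoot])]
  ring

lemma divE_Xzpow (hq0 : q ≠ 0) (r : ℤ) :
    divE q hq0 (RatFunc.X ^ r) = 0 := by
  apply divE_eq_zero_of hq0
  intro α
  rw [ordAt_zpow RatFunc.X_ne_zero, ordAt_X (Units.ne_zero α)]
  ring

lemma divE_sigmaq (hq0 : q ≠ 0) {h : RatFunc ℂ} (hh : h ≠ 0) :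
    divE q hq0 (sigmaq q h) = divE q hq0 h := by
  funext c
  show _ = _
  unfold divE
  conv_rhs => rw [← finsum_comp_equiv (Equiv.mulLeft (Units.mk0 q hq0))]
  congr 1
  funext α
  have hmk : (QuotientGroup.mk (Units.mk0 q hq0 * α) :
      ℂˣ ⧸ Subgroup.zpowers (Units.mk0 q hq0)) = QuotientGroup.mk α := by
    rw [QuotientGroup.mk_mul, (QuotientGroup.eq_one_iff _).mpr (Subgroup.mem_zpowers _)]
    exact one_mul ((QuotientGroup.mk α : ℂˣ ⧸ Subgroup.zpowers (Units.mk0 q hq0)))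
  simp only [Equiv.coe_mulLeft, hmk]
  by_cases h1 : (QuotientGroup.mk α : ℂˣ ⧸ Subgroup.zpowers (Units.mk0 q hq0)) = c
  · simp only [h1, if_true]
    rw [ordAt_sigmaq hq0 hh]
    rfl
  · simp [h1]

lemma divE_SQ (hq0 : q ≠ 0) {a : RatFunc ℂ} (ha : SQ q a) : divE q hq0 a = 0 := by
  obtain ⟨μ, hμ, h, hh, rfl⟩ := ha
  have hC : (RatFunc.C μ : RatFunc ℂ) ≠ 0 := RatFunc_C_ne_zero hμ
  have hσ : sigmaq q h ≠ 0 := sigmaq_ne_zero hq0 hh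
  rw [div_eq_mul_inv, divE_mul hq0 (mul_ne_zero hC hσ) (inv_ne_zero hh),
    divE_mul hq0 hC hσ, divE_C hq0 hμ, divE_sigmaq hq0 hh, divE_inv hq0 hh]
  funext c
  simp

lemma poly_X_pow {p : ℂ[X]} (hp : p ≠ 0) (h0 : ∀ c : ℂ, c ≠ 0 → rootMultiplicity c p = 0) :
    p = C p.leadingCoeff * X ^ p.roots.card := by
  have hsplit := (IsAlgClosed.splits p).eq_prod_roots
  have hall : ∀ x ∈ p.roots.map (fun a => X - C a), x = (X : ℂ[X]) := by
    intro x hx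
    rw [Multiset.mem_map] at hx
    obtain ⟨r, hr, rfl⟩ := hx
    have hr0 : r = 0 := by
      by_contra hne
      have hcount := h0 r hne
      rw [← Polynomial.count_roots] at hcount
      exact absurd hr (Multiset.count_eq_zero.mp hcount)
    simp [hr0]
  have hrep : p.roots.map (fun a => X - C a)
      = Multiset.replicate (Multiset.card p.roots) (X : ℂ[X]) := by
    rw [Multiset.eq_replicate]
    exact ⟨Multiset.card_map _ _, hall⟩
  conv_lhs => rw [hsplit]
  rw [hrep, Multiset.prod_replicate]

lemma base_case {a : RatFunc ℂ} (ha : a ≠ 0) (h0 : ∀ c : ℂ, c ≠ 0 → ordAt a c = 0) :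
    ∃ r : ℤ, ∃ μ : ℂ, μ ≠ 0 ∧ a = RatFunc.C μ * RatFunc.X ^ r := by
  have key : ∀ c : ℂ, c ≠ 0 → rootMultiplicity c a.num = 0 ∧ rootMultiplicity c a.denom = 0 := by
    intro c hc
    have hord := h0 c hc
    rw [ordAt_eq (RatFunc.num_ne_zero ha) (RatFunc.denom_ne_zero a)
      (RatFunc.num_div_denom a).symm c] at hord
    by_contra hcon
    have hpos1 : 0 < rootMultiplicity c a.num := by omega
    have hpos2 : 0 < rootMultiplicity c a.denom := by omega
    have h1 : (X - C c) ∣ a.num :=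
      dvd_trans (dvd_pow_self _ hpos1.ne') (Polynomial.pow_rootMultiplicity_dvd a.num c)
    have h2 : (X - C c) ∣ a.denom :=
      dvd_trans (dvd_pow_self _ hpos2.ne') (Polynomial.pow_rootMultiplicity_dvd a.denom c)
    exact Polynomial.not_isUnit_X_sub_C c
      ((RatFunc.isCoprime_num_denom a).isUnit_of_dvd' h1 h2)
  have hnum := poly_X_pow (RatFunc.num_ne_zero ha) (fun c hc => (key c hc).1)
  have hden := poly_X_pow (RatFunc.denom_ne_zero a) (fun c hc => (key c hc).2)
  have hlc1 : a.num.leadingCoeff ≠ 0 := leadingCoeff_ne_zero.mpr (RatFunc.num_ne_zero ha)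
  have hlc2 : a.denom.leadingCoeff ≠ 0 := leadingCoeff_ne_zero.mpr (RatFunc.denom_ne_zero a)
  refine ⟨(a.num.roots.card : ℤ) - (a.denom.roots.card : ℤ),
    a.num.leadingCoeff / a.denom.leadingCoeff, div_ne_zero hlc1 hlc2, ?_⟩
  conv_lhs => rw [← RatFunc.num_div_denom a, hnum, hden]
  rw [map_mul, map_mul, map_pow, map_pow, RatFunc.algebraMap_C, RatFunc.algebraMap_C,
    RatFunc.algebraMap_X, map_div₀, zpow_sub₀ RatFunc.X_ne_zero, zpow_natCast, zpow_natCast]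
  rw [div_mul_div_comm]

lemma combine (hq0 : q ≠ 0) (μ μ2 : ℂ) (r : ℤ) {h h2 : RatFunc ℂ}
    (hh : h ≠ 0) (hh2 : h2 ≠ 0) :
    (RatFunc.C μ * RatFunc.X ^ r * sigmaq q h / h) * (RatFunc.C μ2 * sigmaq q h2 / h2)
      = RatFunc.C (μ * μ2) * RatFunc.X ^ r * sigmaq q (h * h2) / (h * h2) := by
  rw [sigmaq_mul hq0 hh hh2, map_mul]
  field_simp

lemma empty_case (hq0 : q ≠ 0) {a : RatFunc ℂ} (ha : a ≠ 0)
    (hS : {α : ℂˣ | ordAt a (α : ℂ) ≠ 0} = ∅) :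
    ∃ r : ℤ, ∃ μ : ℂ, μ ≠ 0 ∧ ∃ h : RatFunc ℂ, h ≠ 0 ∧
      a = RatFunc.C μ * RatFunc.X ^ r * sigmaq q h / h := by
  have h0 : ∀ c : ℂ, c ≠ 0 → ordAt a c = 0 := by
    intro c hc
    by_contra hne
    have hmem : (Units.mk0 c hc) ∈ {α : ℂˣ | ordAt a (α : ℂ) ≠ 0} := hne
    rw [hS] at hmem
    exact hmem
  obtain ⟨r, μ, hμ, haa⟩ := base_case ha h0
  refine ⟨r, μ, hμ, 1, one_ne_zero, ?_⟩
  rw [haa, sigmaq_one hq0]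
  field_simp

lemma main_ind (hq0 : q ≠ 0) : ∀ n : ℕ, ∀ a : RatFunc ℂ, a ≠ 0 →
    divE q hq0 a = 0 → {α : ℂˣ | ordAt a (α : ℂ) ≠ 0}.ncard ≤ n →
    ∃ r : ℤ, ∃ μ : ℂ, μ ≠ 0 ∧ ∃ h : RatFunc ℂ, h ≠ 0 ∧
      a = RatFunc.C μ * RatFunc.X ^ r * sigmaq q h / h := by
  intro n
  induction n with
  | zero =>
      intro a ha hdiv hcard
      apply empty_case hq0 ha
      rw [← Set.ncard_eq_zero (ordAt_support_finite ha)]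
      omega
  | succ n ih =>
      intro a ha hdiv hcard
      by_cases hS : {α : ℂˣ | ordAt a (α : ℂ) ≠ 0} = ∅
      · exact empty_case hq0 ha hS
      · obtain ⟨α, hα⟩ := Set.nonempty_iff_ne_empty.mpr hS
        have hα' : ordAt a (α : ℂ) ≠ 0 := hα
        have hfin := ordAt_support_finite ha
        have hsum : divE q hq0 a (QuotientGroup.mk α) = 0 := by rw [hdiv]; rfl
        have hexists : ∃ β : ℂˣ, β ≠ α ∧
            (QuotientGroup.mk β : ℂˣ ⧸ Subgroup.zpowers (Units.mk0 q hq0))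
              = QuotientGroup.mk α ∧ ordAt a (β : ℂ) ≠ 0 := by
          by_contra hc
          push_neg at hc
          have heval : divE q hq0 a (QuotientGroup.mk α) = ordAt a (α : ℂ) := by
            show (∑ᶠ β : ℂˣ, _) = _
            rw [finsum_eq_single _ α]
            · simp
            · intro β hβ
              by_cases h1 : (QuotientGroup.mk β : ℂˣ ⧸ Subgroup.zpowers (Units.mk0 q hq0))
                  = QuotientGroup.mk α
              · simp [h1, hc β hβ h1]
              · simp [h1]
          rw [hsum] at heval
          exact hα' heval.symm
        obtain ⟨β, hβα, hmk, hβ⟩ := hexists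
        obtain ⟨m, hm⟩ : ∃ m : ℤ, (β : ℂ) = q ^ m * (α : ℂ) := by
          have hmem : β⁻¹ * α ∈ Subgroup.zpowers (Units.mk0 q hq0) := QuotientGroup.eq.mp hmk
          obtain ⟨m, hm⟩ := hmem
          have hm' : (Units.mk0 q hq0) ^ m = β⁻¹ * α := hm
          refine ⟨-m, ?_⟩
          have hβeq : β = α * (Units.mk0 q hq0) ^ (-m) := by
            rw [zpow_neg, hm']
            group
          rw [hβeq]
          push_cast [Units.val_zpow_eq_zpow_val]
          rw [Units.val_mk0]
          ring
        set n0 : ℤ := ordAt a (α : ℂ) with hn0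
        set f : RatFunc ℂ := algebraMap ℂ[X] (RatFunc ℂ) (X - C (β : ℂ)) /
          algebraMap ℂ[X] (RatFunc ℂ) (X - C (α : ℂ)) with hf
        have hSQf : SQ q f := by
          rw [hf, hm]
          have h1 := SQ_inv hq0 (SQ_shift hq0 (α : ℂ) m)
          rwa [inv_div] at h1
        have hf0 : f ≠ 0 := SQ_ne_zero hq0 hSQf
        have hordf : ∀ c : ℂ, ordAt f c
            = (if c = (β : ℂ) then 1 else 0) - (if c = (α : ℂ) then 1 else 0) := by
          intro c
          rw [ordAt_eq (X_sub_C_ne_zero _) (X_sub_C_ne_zero _) hf c,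
            Polynomial.rootMultiplicity_X_sub_C, Polynomial.rootMultiplicity_X_sub_C]
          split_ifs <;> simp
        set g : RatFunc ℂ := f ^ n0 with hg
        have hSQg : SQ q g := SQ_zpow hq0 hSQf n0
        have hg0 : g ≠ 0 := SQ_ne_zero hq0 hSQg
        have ha' : a * g ≠ 0 := mul_ne_zero ha hg0
        have hdiv' : divE q hq0 (a * g) = 0 := by
          rw [divE_mul hq0 ha hg0, hdiv, divE_SQ hq0 hSQg]
          simp
        have hαβ : (α : ℂ) ≠ (β : ℂ) := fun hcc => hβα (Units.ext hcc.symm)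
        have hord' : ∀ c : ℂ, ordAt (a * g) c = ordAt a c + n0 * ordAt f c := by
          intro c
          rw [ordAt_mul ha hg0, hg, ordAt_zpow hf0]
        have hsub : {γ : ℂˣ | ordAt (a * g) (γ : ℂ) ≠ 0}
            ⊆ {γ : ℂˣ | ordAt a (γ : ℂ) ≠ 0} \ {α} := by
          intro γ hγ
          simp only [Set.mem_setOf_eq] at hγ
          have hγα : γ ≠ α := by
            intro hcc
            apply hγ
            rw [hcc, hord', hordf, if_neg hαβ, if_pos rfl, ← hn0]
            ring
          constructor
          · by_cases hγβ : (γ : ℂ) = (β : ℂ)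
            · exact fun hcc => hβ (by rwa [← hγβ])
            · have hγα' : (γ : ℂ) ≠ (α : ℂ) := fun hcc => hγα (Units.ext hcc)
              have hzero : ordAt (a * g) (γ : ℂ) = ordAt a (γ : ℂ) := by
                rw [hord', hordf, if_neg hγβ, if_neg hγα']
                ring
              simp only [Set.mem_setOf_eq]
              rw [← hzero]
              exact hγ
          · simpa using hγα
        have hcard' : {γ : ℂˣ | ordAt (a * g) (γ : ℂ) ≠ 0}.ncard ≤ n := by
          have h1 : ({γ : ℂˣ | ordAt a (γ : ℂ) ≠ 0} \ {α}).ncard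
              = {γ : ℂˣ | ordAt a (γ : ℂ) ≠ 0}.ncard - 1 :=
            Set.ncard_diff_singleton_of_mem hα
          have h2 := Set.ncard_le_ncard hsub hfin.diff
          have h3 : 1 ≤ {γ : ℂˣ | ordAt a (γ : ℂ) ≠ 0}.ncard :=
            (Set.ncard_pos hfin).mpr ⟨α, hα⟩
          omega
        obtain ⟨r, μ, hμ, h, hh, heq⟩ := ih (a * g) ha' hdiv' hcard'
        obtain ⟨μ2, hμ2, h2, hh2, hg2⟩ := SQ_inv hq0 hSQg
        have haeq : a = (a * g) * g⁻¹ := by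
          field_simp
        rw [heq, hg2, combine hq0 μ μ2 r hh hh2] at haeq
        exact ⟨r, μ * μ2, mul_ne_zero hμ hμ2, h * h2, mul_ne_zero hh hh2, haeq⟩

end Aux2

/-- Lemme 4.9 / 4.12. The elliptic divisor of `a ∈ ℂ(z)*`
vanishes iff `a = μ·z^r·σ_q(h)/h` for some `r ∈ ℤ`, `μ ∈ ℂ*` and `h ∈ ℂ(z)*`. -/
theorem statement16 (q : ℂ) (hq0 : q ≠ 0) (hq : ‖q‖ ≠ 1)
    (a : RatFunc ℂ) (ha : a ≠ 0) :
    divE q hq0 a = 0 ↔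
      ∃ r : ℤ, ∃ μ : ℂ, μ ≠ 0 ∧ ∃ h : RatFunc ℂ, h ≠ 0 ∧
        a = RatFunc.C μ * RatFunc.X ^ r * sigmaq q h / h := by
  constructor
  · intro hdiv
    exact main_ind hq0 {α : ℂˣ | ordAt a (α : ℂ) ≠ 0}.ncard a ha hdiv le_rfl
  · rintro ⟨r, μ, hμ, h, hh, rfl⟩
    have hC : (RatFunc.C μ : RatFunc ℂ) ≠ 0 := RatFunc_C_ne_zero hμ
    have hX : (RatFunc.X : RatFunc ℂ) ^ r ≠ 0 := zpow_ne_zero r RatFunc.X_ne_zero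
    have hσ : sigmaq q h ≠ 0 := sigmaq_ne_zero hq0 hh
    rw [div_eq_mul_inv, divE_mul hq0 (mul_ne_zero (mul_ne_zero hC hX) hσ) (inv_ne_zero hh),
      divE_mul hq0 (mul_ne_zero hC hX) hσ, divE_mul hq0 hC hX,
      divE_C hq0 hμ, divE_Xzpow hq0 r, divE_sigmaq hq0 hh, divE_inv hq0 hh]
    funext c
    simp
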